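/- Let a, b, c ∈ ℝ with a, b, c ≠ 0, let x₀, y₀ ∈ ℝ, and let s : ℝ → ℝ be a twice differentiable solution of the initial value problem s''(t) = 2c·s(t), s(0) = x₀, s'(0) = x₀² + y₀ + c. Define y(t) = e^{−a sin(bt)} (s'(t) − s(t)² − c). Then y is differentiable, (x,y) := (s,y) satisfies x'(t) = x(t)² + e^{a sin(bt)} y(t) + c and y'(t) = −2 e^{−a sin(bt)} x(t)³ − 2 x(t) y(t) − a b y(t) cos(bt) for all t ∈ ℝ, and (x(0), y(0)) = (x₀, y₀). -/

import Mathlib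

/-- Solving the folded initial value problem `s̈ = 2cs`, `s(0) = x₀`,
`ṡ(0) = x₀² + y₀ + c` and evaluating the passive equation
`y = e^{−a sin bt}(ṡ − s² − c)` produces a flow of the system (des1) through
the initial point `(x₀, y₀)`. -/
theorem example_system_unfolds
    (a b c : ℝ) (ha : a ≠ 0) (hb : b ≠ 0) (hc : c ≠ 0)
    (x₀ y₀ : ℝ) (s : ℝ → ℝ)
    (hs : Differentiable ℝ s)
    (hs2 : ∀ t, HasDerivAt (deriv s) (2 * c * s t) t)
    (hinit : s 0 = x₀) (hinit' : deriv s 0 = x₀ ^ 2 + y₀ + c)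
    (y : ℝ → ℝ)
    (hydef : ∀ t, y t = Real.exp (-(a * Real.sin (b * t))) * (deriv s t - s t ^ 2 - c)) :
    (∀ t, HasDerivAt s (s t ^ 2 + Real.exp (a * Real.sin (b * t)) * y t + c) t) ∧
    (∀ t, HasDerivAt y
      (-2 * Real.exp (-(a * Real.sin (b * t))) * s t ^ 3 - 2 * s t * y t
        - a * b * y t * Real.cos (b * t)) t) ∧
    s 0 = x₀ ∧ y 0 = y₀ := by
  have key : ∀ t, Real.exp (a * Real.sin (b * t)) * y t
      = deriv s t - s t ^ 2 - c := by
    intro t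
    rw [hydef t, ← mul_assoc, ← Real.exp_add]
    rw [add_neg_cancel, Real.exp_zero, one_mul]
  have hx : ∀ t, HasDerivAt s (s t ^ 2 + Real.exp (a * Real.sin (b * t)) * y t + c) t := by
    intro t
    have := (hs t).hasDerivAt
    rwa [show deriv s t = s t ^ 2 + Real.exp (a * Real.sin (b * t)) * y t + c by
      rw [key t]; ring] at this
  refine ⟨hx, ?_, hinit, ?_⟩
  · intro t
    have hE : HasDerivAt (fun t => Real.exp (-(a * Real.sin (b * t))))
        (Real.exp (-(a * Real.sin (b * t))) * (-(a * (Real.cos (b * t) * b)))) t := by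
      have hsin : HasDerivAt (fun t => Real.sin (b * t)) (Real.cos (b * t) * b) t := by
        have h := (Real.hasDerivAt_sin (b * t)).comp t
          ((hasDerivAt_id t).const_mul b)
        simp only [mul_one] at h; exact h
      exact ((hsin.const_mul a).neg).exp
    have hG : HasDerivAt (fun t => deriv s t - s t ^ 2 - c)
        (2 * c * s t - 2 * s t * deriv s t) t := by
      have := ((hs2 t).sub (((hs t).hasDerivAt.pow 2))).sub_const c
      simpa [mul_comm, mul_assoc] using this
    have hy' := hE.mul hG
    have : HasDerivAt y
        (Real.exp (-(a * Real.sin (b * t))) * (-(a * (Real.cos (b * t) * b)))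
          * (deriv s t - s t ^ 2 - c)
          + Real.exp (-(a * Real.sin (b * t))) * (2 * c * s t - 2 * s t * deriv s t)) t := by
      refine HasDerivAt.congr_of_eventuallyEq hy' ?_
      filter_upwards with u using hydef u
    have hds : deriv s t = s t ^ 2 + Real.exp (a * Real.sin (b * t)) * y t + c := by
      rw [key t]; ring
    rw [show (-2 * Real.exp (-(a * Real.sin (b * t))) * s t ^ 3 - 2 * s t * y t
        - a * b * y t * Real.cos (b * t)) =
        (Real.exp (-(a * Real.sin (b * t))) * (-(a * (Real.cos (b * t) * b)))
          * (deriv s t - s t ^ 2 - c)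
          + Real.exp (-(a * Real.sin (b * t))) * (2 * c * s t - 2 * s t * deriv s t)) from ?_]
    · exact this
    · rw [hydef t, hds]
      have : Real.exp (-(a * Real.sin (b * t))) * Real.exp (a * Real.sin (b * t)) = 1 := by
        rw [← Real.exp_add]; simp
      nlinarith [this, Real.exp_pos (-(a * Real.sin (b * t))),
        Real.exp_pos (a * Real.sin (b * t))]
  · rw [hydef 0, hinit', hinit]
    simp only [mul_zero, Real.sin_zero, neg_zero, Real.exp_zero, one_mul]; ring
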